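/- (Greedy heuristic is an upper bound.) Let c ≥ 0 and let x = (x_1,…,x_m) and y = (y_1,…,y_n) be time series with m ≥ n. Define values g_0, g_1, …, g_{m−1} by: g_0 = |x_m − y_n|; for 0 < i < n, g_i = g_{i−1} + 2c + |x_{m−i} − x_{m−i+1}| + |y_{n−i} − y_{n−i+1}| if |x_{m−i} − y_{n−i}| ≥ 2c and |x_{m−i+1} − y_{n−i+1}| ≥ 2c, and g_i = g_{i−1} + |x_{m−i} − y_{n−i}| otherwise; for n ≤ i < m, g_i = g_{i−1} + c + |x_{m−i} − x_{m−i+1}| if |x_{m−i} − y_1| ≥ c and |x_{m−i+1} − y_1| ≥ c, and g_i = g_{i−1} + c + |x_{m−i} − y_1| otherwise. Let d_greedy(x,y) = g_{m−1}. Then d(x,y) ≤ d_greedy(x,y). -/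

import Mathlib

/-- The MSM split/merge cost function `C(u, v, w)`: it is `c` if `u` lies
between `v` and `w`, and `c + min(|u-v|, |u-w|)` otherwise. -/
noncomputable def msmC (c u v w : ℝ) : ℝ :=
  if (v ≤ u ∧ u ≤ w) ∨ (w ≤ u ∧ u ≤ v) then c else c + min |u - v| |u - w|

/-- The MSM dynamic-programming table `D[i,j]` (1-based indices) for the time
series given by the values of `x`, `y : ℕ → ℝ` at indices `1, 2, …`;
values at row/column `0` are junk.  The MSM distance between
`(x 1, …, x m)` and `(y 1, …, y n)` is `msmD c x y m n`. -/
noncomputable def msmD (c : ℝ) (x y : ℕ → ℝ) : ℕ → ℕ → ℝ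
  | 0, _ => 0
  | _ + 1, 0 => 0
  | 1, 1 => |x 1 - y 1|
  | i + 2, 1 => msmD c x y (i + 1) 1 + msmC c (x (i + 2)) (x (i + 1)) (y 1)
  | 1, j + 2 => msmD c x y 1 (j + 1) + msmC c (y (j + 2)) (x 1) (y (j + 1))
  | i + 2, j + 2 =>
      min (msmD c x y (i + 1) (j + 1) + |x (i + 2) - y (j + 2)|)
        (min (msmD c x y (i + 1) (j + 2) + msmC c (x (i + 2)) (x (i + 1)) (y (j + 2)))
          (msmD c x y (i + 2) (j + 1) + msmC c (y (j + 2)) (x (i + 2)) (y (j + 1))))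
  termination_by i j => (i, j)

lemma msmC_le_abs_right (c u v w : ℝ) (hc : 0 ≤ c) : msmC c u v w ≤ c + |u - w| := by
  unfold msmC
  split_ifs with h
  · nlinarith [abs_nonneg (u - w)]
  · nlinarith [min_le_right |u - v| |u - w|]

lemma msmL2 (c u v w : ℝ) : msmC c u v w ≤ c + |u - v| + |u - w| - |v - w| := by
  unfold msmC
  simp only [min_def]
  rcases abs_cases (u - v) with ⟨h1,h1'⟩|⟨h1,h1'⟩ <;>
  rcases abs_cases (u - w) with ⟨h2,h2'⟩|⟨h2,h2'⟩ <;>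
  rcases abs_cases (v - w) with ⟨h3,h3'⟩|⟨h3,h3'⟩ <;>
  split_ifs <;>
  simp -failIfUnchanged only [not_or, not_and_or, not_le] at * <;>
  casesm* _ ∧ _, _ ∨ _ <;> linarith

lemma msmD_one_one (c : ℝ) (x y : ℕ → ℝ) : msmD c x y 1 1 = |x 1 - y 1| := by
  rw [msmD]

lemma msmD_diag (c : ℝ) (x y : ℕ → ℝ) (a b : ℕ) :
    msmD c x y (a + 2) (b + 2) ≤ msmD c x y (a + 1) (b + 1) + |x (a + 2) - y (b + 2)| := by
  rw [msmD]; exact min_le_left _ _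

lemma msmD_vert (c : ℝ) (x y : ℕ → ℝ) (a b : ℕ) :
    msmD c x y (a + 2) (b + 1) ≤
      msmD c x y (a + 1) (b + 1) + msmC c (x (a + 2)) (x (a + 1)) (y (b + 1)) := by
  cases b with
  | zero => rw [msmD]
  | succ j => rw [msmD]; exact le_trans (min_le_right _ _) (min_le_left _ _)

lemma msmD_horiz (c : ℝ) (x y : ℕ → ℝ) (a b : ℕ) :
    msmD c x y (a + 1) (b + 2) ≤
      msmD c x y (a + 1) (b + 1) + msmC c (y (b + 2)) (x (a + 1)) (y (b + 1)) := by
  cases a with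
  | zero => rw [msmD]
  | succ i => rw [msmD]; exact le_trans (min_le_right _ _) (min_le_right _ _)

/-- Combined two-merge step bound for the interior of the table. -/
lemma msmD_split_step (c : ℝ) (x y : ℕ → ℝ) (a b : ℕ) :
    msmD c x y (a + 2) (b + 2) ≤
      msmD c x y (a + 1) (b + 1) + 2 * c + |x (a + 1) - x (a + 2)| + |y (b + 1) - y (b + 2)|
        + |x (a + 2) - y (b + 2)| - |x (a + 1) - y (b + 1)| := by
  have h1 := msmD_vert c x y a b
  have h2 := msmD_horiz c x y (a + 1) b
  have h3 := msmL2 c (x (a + 2)) (x (a + 1)) (y (b + 1))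
  have h4 := msmL2 c (y (b + 2)) (x (a + 2)) (y (b + 1))
  have e1 := abs_sub_comm (x (a + 1)) (x (a + 2))
  have e2 := abs_sub_comm (y (b + 1)) (y (b + 2))
  have e3 := abs_sub_comm (y (b + 2)) (x (a + 2))
  linarith

/-- The greedy heuristic is an upper bound on the MSM distance. -/
theorem msm_greedy_upper_bound (c : ℝ) (hc : 0 ≤ c) (x y : ℕ → ℝ) (m n : ℕ)
    (hn : 1 ≤ n) (hmn : n ≤ m) (g : ℕ → ℝ)
    (hbase : g 0 = |x m - y n|)
    (hrec₁ : ∀ i, 0 < i → i < n →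
      g i = if 2 * c ≤ |x (m - i) - y (n - i)| ∧ 2 * c ≤ |x (m - i + 1) - y (n - i + 1)| then
          g (i - 1) + 2 * c + |x (m - i) - x (m - i + 1)| + |y (n - i) - y (n - i + 1)|
        else
          g (i - 1) + |x (m - i) - y (n - i)|)
    (hrec₂ : ∀ i, n ≤ i → i < m →
      g i = if c ≤ |x (m - i) - y 1| ∧ c ≤ |x (m - i + 1) - y 1| then
          g (i - 1) + c + |x (m - i) - x (m - i + 1)|
        else
          g (i - 1) + c + |x (m - i) - y 1|) :
    msmD c x y m n ≤ g (m - 1) := by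
  have key : ∀ i, i ≤ m - 1 →
      msmD c x y m n ≤
        msmD c x y (m - i) (max (n - i) 1) - |x (m - i) - y (max (n - i) 1)| + g i := by
    intro i
    induction i with
    | zero =>
      intro _
      have hmax : max (n - 0) 1 = n := by omega
      simp only [Nat.sub_zero] at hmax ⊢
      rw [hmax, hbase]
      linarith
    | succ i IH =>
      intro hle
      have IH' := IH (by omega)
      by_cases hph : i + 1 < n
      · -- phase 1
        obtain ⟨a, ha⟩ : ∃ a, m - i = a + 2 := ⟨m - i - 2, by omega⟩
        obtain ⟨b, hb⟩ : ∃ b, n - i = b + 2 := ⟨n - i - 2, by omega⟩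
        have e1 : m - (i + 1) = a + 1 := by omega
        have e2 : n - (i + 1) = b + 1 := by omega
        have e5 : m - (i + 1) + 1 = a + 2 := by omega
        have e6 : n - (i + 1) + 1 = b + 2 := by omega
        have emax : max (b + 1) 1 = b + 1 := by omega
        have emax' : max (n - i) 1 = b + 2 := by omega
        rw [ha, emax'] at IH'
        rw [hrec₁ (i + 1) (by omega) hph, Nat.add_sub_cancel, e1, e2, emax,
          show a + 1 + 1 = a + 2 from by omega, show b + 1 + 1 = b + 2 from by omega]
        split_ifs with hcond
        · have hs := msmD_split_step c x y a b
          linarith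
        · have hd := msmD_diag c x y a b
          linarith
      · -- phase 2
        obtain ⟨a, ha⟩ : ∃ a, m - i = a + 2 := ⟨m - i - 2, by omega⟩
        have e1 : m - (i + 1) = a + 1 := by omega
        have e5 : m - (i + 1) + 1 = a + 2 := by omega
        have emax : max (n - (i + 1)) 1 = 1 := by omega
        have emax' : max (n - i) 1 = 1 := by omega
        rw [ha, emax'] at IH'
        rw [hrec₂ (i + 1) (by omega) (by omega), Nat.add_sub_cancel, e1, emax,
          show a + 1 + 1 = a + 2 from by omega]
        have hv := msmD_vert c x y a 0
        simp only [Nat.zero_add] at hv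
        split_ifs with hcond
        · have h3 := msmL2 c (x (a + 2)) (x (a + 1)) (y 1)
          have ec := abs_sub_comm (x (a + 1)) (x (a + 2))
          linarith
        · have h3 := msmC_le_abs_right c (x (a + 2)) (x (a + 1)) (y 1) hc
          linarith
  have hfin := key (m - 1) le_rfl
  have e1 : m - (m - 1) = 1 := by omega
  have emax : max (n - (m - 1)) 1 = 1 := by omega
  rw [e1, emax, msmD_one_one] at hfin
  linarith
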